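/- Let ψ : ℝ → ℝ be nondecreasing, let 0 < r < R < 1, and let A = ([−R,R]×(0,R]) \ ([−r,r]×(0,r)). Then ∫_A (ψ(x+y) − ψ(x−y))²/y² dx dy ≤ 2·(ψ(2R) − ψ(−2R))² + 8·Σ_{m=0}^∞ Σ_{ℓ ∈ S(m,r,R)} (ψ((ℓ+2)·R·2^{−m}) − ψ((ℓ−2)·R·2^{−m}))², where S(m,r,R) = {ℓ ∈ ℤ : r ≤ R·2^{−m}·|ℓ| ≤ R}. -/

import Mathlib

open MeasureTheory
open scoped ENNReal

-- dyadic strips cover (0, R]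
lemma dyadic_mem {R y : ℝ} (hR : 0 < R) (hy : y ∈ Set.Ioc 0 R) :
    ∃ m : ℕ, y ∈ Set.Ioc (R / 2 ^ (m + 1)) (R / 2 ^ m) := by
  obtain ⟨hy0, hyR⟩ := hy
  have hex : ∃ m : ℕ, R / 2 ^ (m + 1) < y := by
    obtain ⟨n, hn⟩ := pow_unbounded_of_one_lt (R / y) (by norm_num : (1:ℝ) < 2)
    refine ⟨n, ?_⟩
    have h2n : (0:ℝ) < 2 ^ (n+1) := by positivity
    have : R / y < 2 ^ (n+1) := lt_of_lt_of_le hn (by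
      apply pow_le_pow_right₀ (by norm_num) (Nat.le_succ n))
    rw [div_lt_iff₀ h2n]
    calc R = (R / y) * y := by field_simp
    _ < 2 ^ (n+1) * y := by nlinarith
    _ = y * 2 ^ (n+1) := by ring
  refine ⟨Nat.find hex, Nat.find_spec hex, ?_⟩
  rcases Nat.eq_zero_or_pos (Nat.find hex) with h0 | hpos
  · rw [h0]; simpa using hyR
  · obtain ⟨k, hk⟩ := Nat.exists_eq_succ_of_ne_zero hpos.ne'
    have := Nat.find_min hex (by omega : k < Nat.find hex)
    rw [hk]
    exact le_of_not_gt (by simpa using this)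

lemma ceil_cover {a : ℝ} (x : ℝ) (ha : 0 < a) :
    ∃ ℓ : ℤ, x ∈ Set.Ioc (((ℓ:ℝ) - 1) * a) ((ℓ:ℝ) * a) := by
  refine ⟨⌈x / a⌉, ?_, ?_⟩
  · have := Int.ceil_lt_add_one (x / a)
    have h : ((⌈x / a⌉ : ℝ) - 1) < x / a := by linarith
    calc ((⌈x / a⌉ : ℝ) - 1) * a < (x / a) * a := by exact mul_lt_mul_of_pos_right h ha
    _ = x := by field_simp
  · have := Int.le_ceil (x / a)
    calc x = (x / a) * a := by field_simp
    _ ≤ (⌈x / a⌉ : ℝ) * a := by exact mul_le_mul_of_nonneg_right this ha.le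

lemma floor_cover {a : ℝ} (x : ℝ) (ha : 0 < a) :
    ∃ ℓ : ℤ, x ∈ Set.Ico ((ℓ:ℝ) * a) (((ℓ:ℝ) + 1) * a) := by
  refine ⟨⌊x / a⌋, ?_, ?_⟩
  · have := Int.floor_le (x / a)
    calc ((⌊x / a⌋ : ℝ)) * a ≤ (x / a) * a := by exact mul_le_mul_of_nonneg_right this ha.le
    _ = x := by field_simp
  · have := Int.lt_floor_add_one (x / a)
    calc x = (x / a) * a := by field_simp
    _ < ((⌊x / a⌋ : ℝ) + 1) * a := by exact mul_lt_mul_of_pos_right this ha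

lemma piece_pos (ψ : ℝ → ℝ) (hmono : Monotone ψ) (r R : ℝ)
    (h1 : 0 < r) (h2 : r < R) (m : ℕ) (ℓ : ℤ) :
    ∫⁻ p in (Set.Ioc (((ℓ:ℝ) - 1) * (R / 2 ^ m)) ((ℓ:ℝ) * (R / 2 ^ m)) ∩ Set.Ioc r R) ×ˢ
        Set.Ioc (R / 2 ^ (m + 1)) (R / 2 ^ m),
        ENNReal.ofReal ((ψ (p.1 + p.2) - ψ (p.1 - p.2)) ^ 2 / p.2 ^ 2) ≤
      if r ≤ R * |(ℓ : ℝ)| / 2 ^ m ∧ R * |(ℓ : ℝ)| / 2 ^ m ≤ R then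
        2 * ENNReal.ofReal ((ψ (((ℓ : ℝ) + 2) * R / 2 ^ m) - ψ (((ℓ : ℝ) - 2) * R / 2 ^ m)) ^ 2)
      else 0 := by
  set a : ℝ := R / 2 ^ m with ha
  have hR : 0 < R := h1.trans h2
  have hapos : 0 < a := by positivity
  have hbpos : (0:ℝ) < R / 2 ^ (m + 1) := by positivity
  set J : Set ℝ := Set.Ioc (((ℓ:ℝ) - 1) * a) ((ℓ:ℝ) * a) ∩ Set.Ioc r R with hJ
  rcases Set.eq_empty_or_nonempty J with he | ⟨x0, hx0⟩
  · rw [he, Set.empty_prod, Measure.restrict_empty, lintegral_zero_measure]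
    exact zero_le
  obtain ⟨⟨hx1, hx2⟩, hx3, hx4⟩ := hx0
  -- derive the condition
  have hl1 : (1:ℤ) ≤ ℓ := by
    by_contra hcon
    push_neg at hcon
    have hle : (ℓ:ℝ) ≤ 0 := by exact_mod_cast (by omega : ℓ ≤ 0)
    nlinarith [mul_nonpos_of_nonpos_of_nonneg hle hapos.le]
  have habs : |(ℓ:ℝ)| = (ℓ:ℝ) := abs_of_pos (by exact_mod_cast hl1)
  have hcond1 : r ≤ R * |(ℓ:ℝ)| / 2 ^ m := by
    rw [habs]
    have h5 : r < (ℓ:ℝ) * a := lt_of_lt_of_le hx3 hx2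
    have heq : R * (ℓ:ℝ) / 2 ^ m = (ℓ:ℝ) * (R / 2 ^ m) := by ring
    rw [ha] at h5; rw [heq]; linarith
  have hlle : (ℓ:ℝ) ≤ 2 ^ m := by
    have h5 : ((ℓ:ℝ) - 1) * a < R := lt_of_lt_of_le hx1 hx4
    have h6 : (ℓ:ℝ) - 1 < 2 ^ m := by
      rw [ha] at h5
      by_contra hc
      push_neg at hc
      have : (2:ℝ)^m * (R / 2^m) ≤ ((ℓ:ℝ)-1) * (R / 2^m) := by
        exact mul_le_mul_of_nonneg_right hc hapos.le
      have h7 : (2:ℝ)^m * (R / 2^m) = R := by field_simp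
      linarith
    have h8 : ℓ - 1 < 2 ^ m := by exact_mod_cast h6
    have h9 : ℓ ≤ 2 ^ m := by omega
    exact_mod_cast h9
  have hcond2 : R * |(ℓ:ℝ)| / 2 ^ m ≤ R := by
    rw [habs, div_le_iff₀ (by positivity : (0:ℝ) < 2^m)]
    nlinarith
  rw [if_pos ⟨hcond1, hcond2⟩]
  -- pointwise bound
  set c : ℝ := (ψ (((ℓ : ℝ) + 2) * R / 2 ^ m) - ψ (((ℓ : ℝ) - 2) * R / 2 ^ m)) ^ 2 with hc
  have key : ∀ p : ℝ × ℝ, p ∈ J ×ˢ Set.Ioc (R / 2 ^ (m+1)) (R / 2 ^ m) →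
      ENNReal.ofReal ((ψ (p.1 + p.2) - ψ (p.1 - p.2)) ^ 2 / p.2 ^ 2) ≤
      ENNReal.ofReal (c / (R / 2 ^ (m+1)) ^ 2) := by
    rintro ⟨x, y⟩ ⟨⟨⟨hxa, hxb⟩, -, -⟩, hya, hyb⟩
    simp only
    apply ENNReal.ofReal_le_ofReal
    have hy0 : 0 < y := hbpos.trans hya
    have hup : x + y ≤ ((ℓ:ℝ) + 2) * R / 2 ^ m := by
      have : ((ℓ:ℝ) + 2) * R / 2^m = (ℓ:ℝ) * a + 2 * a := by rw [ha]; ring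
      rw [this]; linarith
    have hdn : ((ℓ:ℝ) - 2) * R / 2 ^ m ≤ x - y := by
      have : ((ℓ:ℝ) - 2) * R / 2^m = ((ℓ:ℝ) - 1) * a - a := by rw [ha]; ring
      rw [this]; linarith
    have hd0 : 0 ≤ ψ (x + y) - ψ (x - y) := by
      have := hmono (by linarith : x - y ≤ x + y); linarith
    have hdc : ψ (x + y) - ψ (x - y) ≤
        ψ (((ℓ : ℝ) + 2) * R / 2 ^ m) - ψ (((ℓ : ℝ) - 2) * R / 2 ^ m) := by
      have := hmono hup; have := hmono hdn; linarith
    have hsq : (ψ (x + y) - ψ (x - y)) ^ 2 ≤ c := by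
      rw [hc]; exact pow_le_pow_left₀ hd0 hdc 2
    have hy2 : (R / 2 ^ (m+1)) ^ 2 ≤ y ^ 2 := pow_le_pow_left₀ hbpos.le hya.le 2
    exact div_le_div₀ (by positivity) hsq (by positivity) hy2
  calc ∫⁻ p in J ×ˢ Set.Ioc (R / 2 ^ (m+1)) (R / 2 ^ m),
        ENNReal.ofReal ((ψ (p.1 + p.2) - ψ (p.1 - p.2)) ^ 2 / p.2 ^ 2)
      ≤ ∫⁻ _ in J ×ˢ Set.Ioc (R / 2 ^ (m+1)) (R / 2 ^ m),
        ENNReal.ofReal (c / (R / 2 ^ (m+1)) ^ 2) := by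
        apply setLIntegral_mono' ?_ key
        exact (((measurableSet_Ioc).inter measurableSet_Ioc).prod measurableSet_Ioc)
    _ = ENNReal.ofReal (c / (R / 2 ^ (m+1)) ^ 2) *
        volume (J ×ˢ Set.Ioc (R / 2 ^ (m+1)) (R / 2 ^ m)) := setLIntegral_const _ _
    _ ≤ ENNReal.ofReal (c / (R / 2 ^ (m+1)) ^ 2) *
        (ENNReal.ofReal a * ENNReal.ofReal (R / 2 ^ m - R / 2 ^ (m+1))) := by
        refine mul_le_mul_right ?_ _
        calc volume (J ×ˢ Set.Ioc (R / 2 ^ (m+1)) (R / 2 ^ m))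
            ≤ volume ((Set.Ioc (((ℓ:ℝ) - 1) * a) ((ℓ:ℝ) * a)) ×ˢ
              Set.Ioc (R / 2 ^ (m+1)) (R / 2 ^ m)) := by
              apply measure_mono (Set.prod_mono Set.inter_subset_left subset_rfl)
          _ = ENNReal.ofReal a * ENNReal.ofReal (R / 2 ^ m - R / 2 ^ (m+1)) := by
              rw [Measure.volume_eq_prod, Measure.prod_prod, Real.volume_Ioc, Real.volume_Ioc]
              congr 1
              ring_nf
    _ ≤ 2 * ENNReal.ofReal c := by
        rw [← ENNReal.ofReal_mul (by positivity), ← ENNReal.ofReal_mul (by positivity)]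
        rw [show (2:ℝ≥0∞) = ENNReal.ofReal 2 by simp, ← ENNReal.ofReal_mul (by norm_num)]
        apply ENNReal.ofReal_le_ofReal
        have h2m : (0:ℝ) < 2 ^ m := by positivity
        have hcc : 0 ≤ c := sq_nonneg _
        have hkey : c / (R / 2 ^ (m+1)) ^ 2 * (a * (R / 2 ^ m - R / 2 ^ (m+1))) = 2 * c := by
          rw [ha]; field_simp [hR.ne']; ring
        rw [hkey]

lemma piece_neg (ψ : ℝ → ℝ) (hmono : Monotone ψ) (r R : ℝ)
    (h1 : 0 < r) (h2 : r < R) (m : ℕ) (ℓ : ℤ) :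
    ∫⁻ p in (Set.Ico ((ℓ:ℝ) * (R / 2 ^ m)) (((ℓ:ℝ) + 1) * (R / 2 ^ m)) ∩ Set.Ico (-R) (-r)) ×ˢ
        Set.Ioc (R / 2 ^ (m + 1)) (R / 2 ^ m),
        ENNReal.ofReal ((ψ (p.1 + p.2) - ψ (p.1 - p.2)) ^ 2 / p.2 ^ 2) ≤
      if r ≤ R * |(ℓ : ℝ)| / 2 ^ m ∧ R * |(ℓ : ℝ)| / 2 ^ m ≤ R then
        2 * ENNReal.ofReal ((ψ (((ℓ : ℝ) + 2) * R / 2 ^ m) - ψ (((ℓ : ℝ) - 2) * R / 2 ^ m)) ^ 2)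
      else 0 := by
  set a : ℝ := R / 2 ^ m with ha
  have hR : 0 < R := h1.trans h2
  have hapos : 0 < a := by positivity
  have hbpos : (0:ℝ) < R / 2 ^ (m + 1) := by positivity
  set J : Set ℝ := Set.Ico ((ℓ:ℝ) * a) (((ℓ:ℝ) + 1) * a) ∩ Set.Ico (-R) (-r) with hJ
  rcases Set.eq_empty_or_nonempty J with he | ⟨x0, hx0⟩
  · rw [he, Set.empty_prod, Measure.restrict_empty, lintegral_zero_measure]
    exact zero_le
  obtain ⟨⟨hx1, hx2⟩, hx3, hx4⟩ := hx0
  have hl1 : ℓ ≤ -1 := by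
    by_contra hcon
    push_neg at hcon
    have hge : (0:ℝ) ≤ (ℓ:ℝ) := by exact_mod_cast (by omega : (0:ℤ) ≤ ℓ)
    nlinarith [mul_nonneg hge hapos.le]
  have habs : |(ℓ:ℝ)| = -(ℓ:ℝ) := abs_of_neg (by exact_mod_cast (by omega : ℓ < 0))
  have hcond1 : r ≤ R * |(ℓ:ℝ)| / 2 ^ m := by
    rw [habs]
    have h5 : (ℓ:ℝ) * a < -r := lt_of_le_of_lt hx1 hx4
    have heq : R * (-(ℓ:ℝ)) / 2 ^ m = -((ℓ:ℝ) * (R / 2 ^ m)) := by ring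
    rw [heq]; rw [ha] at h5; linarith
  have hlle : -(ℓ:ℝ) ≤ 2 ^ m := by
    have h5 : -R < ((ℓ:ℝ) + 1) * a := lt_of_le_of_lt hx3 hx2
    have h6 : -(2:ℝ) ^ m < (ℓ:ℝ) + 1 := by
      rw [ha] at h5
      by_contra hc
      push_neg at hc
      have : ((ℓ:ℝ) + 1) * (R / 2^m) ≤ (-(2:ℝ)^m) * (R / 2^m) := by
        exact mul_le_mul_of_nonneg_right hc hapos.le
      have h7 : (-(2:ℝ)^m) * (R / 2^m) = -R := by field_simp
      linarith
    have h8 : -(2:ℤ) ^ m < ℓ + 1 := by exact_mod_cast h6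
    have h9 : -ℓ ≤ 2 ^ m := by omega
    exact_mod_cast h9
  have hcond2 : R * |(ℓ:ℝ)| / 2 ^ m ≤ R := by
    rw [habs, div_le_iff₀ (by positivity : (0:ℝ) < 2^m)]
    nlinarith
  rw [if_pos ⟨hcond1, hcond2⟩]
  set c : ℝ := (ψ (((ℓ : ℝ) + 2) * R / 2 ^ m) - ψ (((ℓ : ℝ) - 2) * R / 2 ^ m)) ^ 2 with hc
  have key : ∀ p : ℝ × ℝ, p ∈ J ×ˢ Set.Ioc (R / 2 ^ (m+1)) (R / 2 ^ m) →
      ENNReal.ofReal ((ψ (p.1 + p.2) - ψ (p.1 - p.2)) ^ 2 / p.2 ^ 2) ≤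
      ENNReal.ofReal (c / (R / 2 ^ (m+1)) ^ 2) := by
    rintro ⟨x, y⟩ ⟨⟨⟨hxa, hxb⟩, -, -⟩, hya, hyb⟩
    simp only
    apply ENNReal.ofReal_le_ofReal
    have hy0 : 0 < y := hbpos.trans hya
    have hup : x + y ≤ ((ℓ:ℝ) + 2) * R / 2 ^ m := by
      have : ((ℓ:ℝ) + 2) * R / 2^m = ((ℓ:ℝ) + 1) * a + a := by rw [ha]; ring
      rw [this]; linarith
    have hdn : ((ℓ:ℝ) - 2) * R / 2 ^ m ≤ x - y := by
      have : ((ℓ:ℝ) - 2) * R / 2^m = (ℓ:ℝ) * a - 2 * a := by rw [ha]; ring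
      rw [this]; linarith
    have hd0 : 0 ≤ ψ (x + y) - ψ (x - y) := by
      have := hmono (by linarith : x - y ≤ x + y); linarith
    have hdc : ψ (x + y) - ψ (x - y) ≤
        ψ (((ℓ : ℝ) + 2) * R / 2 ^ m) - ψ (((ℓ : ℝ) - 2) * R / 2 ^ m) := by
      have := hmono hup; have := hmono hdn; linarith
    have hsq : (ψ (x + y) - ψ (x - y)) ^ 2 ≤ c := by
      rw [hc]; exact pow_le_pow_left₀ hd0 hdc 2
    have hy2 : (R / 2 ^ (m+1)) ^ 2 ≤ y ^ 2 := pow_le_pow_left₀ hbpos.le hya.le 2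
    exact div_le_div₀ (by positivity) hsq (by positivity) hy2
  calc ∫⁻ p in J ×ˢ Set.Ioc (R / 2 ^ (m+1)) (R / 2 ^ m),
        ENNReal.ofReal ((ψ (p.1 + p.2) - ψ (p.1 - p.2)) ^ 2 / p.2 ^ 2)
      ≤ ∫⁻ _ in J ×ˢ Set.Ioc (R / 2 ^ (m+1)) (R / 2 ^ m),
        ENNReal.ofReal (c / (R / 2 ^ (m+1)) ^ 2) := by
        apply setLIntegral_mono' ?_ key
        exact (((measurableSet_Ico).inter measurableSet_Ico).prod measurableSet_Ioc)
    _ = ENNReal.ofReal (c / (R / 2 ^ (m+1)) ^ 2) *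
        volume (J ×ˢ Set.Ioc (R / 2 ^ (m+1)) (R / 2 ^ m)) := setLIntegral_const _ _
    _ ≤ ENNReal.ofReal (c / (R / 2 ^ (m+1)) ^ 2) *
        (ENNReal.ofReal a * ENNReal.ofReal (R / 2 ^ m - R / 2 ^ (m+1))) := by
        refine mul_le_mul_right ?_ _
        calc volume (J ×ˢ Set.Ioc (R / 2 ^ (m+1)) (R / 2 ^ m))
            ≤ volume ((Set.Ico ((ℓ:ℝ) * a) (((ℓ:ℝ) + 1) * a)) ×ˢ
              Set.Ioc (R / 2 ^ (m+1)) (R / 2 ^ m)) := by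
              apply measure_mono (Set.prod_mono Set.inter_subset_left subset_rfl)
          _ = ENNReal.ofReal a * ENNReal.ofReal (R / 2 ^ m - R / 2 ^ (m+1)) := by
              rw [Measure.volume_eq_prod, Measure.prod_prod, Real.volume_Ico, Real.volume_Ioc]
              congr 1
              ring_nf
    _ ≤ 2 * ENNReal.ofReal c := by
        rw [← ENNReal.ofReal_mul (by positivity), ← ENNReal.ofReal_mul (by positivity)]
        rw [show (2:ℝ≥0∞) = ENNReal.ofReal 2 by simp, ← ENNReal.ofReal_mul (by norm_num)]
        apply ENNReal.ofReal_le_ofReal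
        have hkey : c / (R / 2 ^ (m+1)) ^ 2 * (a * (R / 2 ^ m - R / 2 ^ (m+1))) = 2 * c := by
          rw [ha]; field_simp [hR.ne']; ring
        rw [hkey]

lemma region_pos (ψ : ℝ → ℝ) (hmono : Monotone ψ) (r R : ℝ)
    (h1 : 0 < r) (h2 : r < R) :
    ∫⁻ p in Set.Ioc r R ×ˢ Set.Ioc 0 R,
        ENNReal.ofReal ((ψ (p.1 + p.2) - ψ (p.1 - p.2)) ^ 2 / p.2 ^ 2) ≤
      2 * ∑' m : ℕ, ∑' ℓ : ℤ,
          if r ≤ R * |(ℓ : ℝ)| / 2 ^ m ∧ R * |(ℓ : ℝ)| / 2 ^ m ≤ R then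
            ENNReal.ofReal ((ψ (((ℓ : ℝ) + 2) * R / 2 ^ m) - ψ (((ℓ : ℝ) - 2) * R / 2 ^ m)) ^ 2)
          else 0 := by
  have hR : 0 < R := h1.trans h2
  have hstrip : ∀ m : ℕ,
      ∫⁻ p in Set.Ioc r R ×ˢ Set.Ioc (R / 2 ^ (m + 1)) (R / 2 ^ m),
        ENNReal.ofReal ((ψ (p.1 + p.2) - ψ (p.1 - p.2)) ^ 2 / p.2 ^ 2) ≤
      ∑' ℓ : ℤ, if r ≤ R * |(ℓ : ℝ)| / 2 ^ m ∧ R * |(ℓ : ℝ)| / 2 ^ m ≤ R then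
            2 * ENNReal.ofReal ((ψ (((ℓ : ℝ) + 2) * R / 2 ^ m) - ψ (((ℓ : ℝ) - 2) * R / 2 ^ m)) ^ 2)
          else 0 := by
    intro m
    have hapos : (0:ℝ) < R / 2 ^ m := by positivity
    calc ∫⁻ p in Set.Ioc r R ×ˢ Set.Ioc (R / 2 ^ (m + 1)) (R / 2 ^ m),
          ENNReal.ofReal ((ψ (p.1 + p.2) - ψ (p.1 - p.2)) ^ 2 / p.2 ^ 2)
        ≤ ∫⁻ p in (⋃ ℓ : ℤ, (Set.Ioc (((ℓ:ℝ) - 1) * (R / 2 ^ m)) ((ℓ:ℝ) * (R / 2 ^ m)) ∩ Set.Ioc r R)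
            ×ˢ Set.Ioc (R / 2 ^ (m + 1)) (R / 2 ^ m)),
          ENNReal.ofReal ((ψ (p.1 + p.2) - ψ (p.1 - p.2)) ^ 2 / p.2 ^ 2) := by
          apply lintegral_mono_set
          rw [← Set.iUnion_prod_const]
          apply Set.prod_mono ?_ subset_rfl
          intro x hx
          obtain ⟨ℓ, hℓ⟩ := ceil_cover x hapos
          exact Set.mem_iUnion.mpr ⟨ℓ, hℓ, hx⟩
      _ ≤ ∑' ℓ : ℤ, ∫⁻ p in (Set.Ioc (((ℓ:ℝ) - 1) * (R / 2 ^ m)) ((ℓ:ℝ) * (R / 2 ^ m)) ∩ Set.Ioc r R)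
            ×ˢ Set.Ioc (R / 2 ^ (m + 1)) (R / 2 ^ m),
          ENNReal.ofReal ((ψ (p.1 + p.2) - ψ (p.1 - p.2)) ^ 2 / p.2 ^ 2) :=
          lintegral_iUnion_le _ _
      _ ≤ _ := ENNReal.tsum_le_tsum (fun ℓ => piece_pos ψ hmono r R h1 h2 m ℓ)
  calc ∫⁻ p in Set.Ioc r R ×ˢ Set.Ioc 0 R,
        ENNReal.ofReal ((ψ (p.1 + p.2) - ψ (p.1 - p.2)) ^ 2 / p.2 ^ 2)
      ≤ ∫⁻ p in (⋃ m : ℕ, Set.Ioc r R ×ˢ Set.Ioc (R / 2 ^ (m + 1)) (R / 2 ^ m)),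
        ENNReal.ofReal ((ψ (p.1 + p.2) - ψ (p.1 - p.2)) ^ 2 / p.2 ^ 2) := by
        apply lintegral_mono_set
        rw [← Set.prod_iUnion]
        apply Set.prod_mono subset_rfl
        intro y hy
        obtain ⟨m, hm⟩ := dyadic_mem hR hy
        exact Set.mem_iUnion.mpr ⟨m, hm⟩
    _ ≤ ∑' m : ℕ, ∫⁻ p in Set.Ioc r R ×ˢ Set.Ioc (R / 2 ^ (m + 1)) (R / 2 ^ m),
        ENNReal.ofReal ((ψ (p.1 + p.2) - ψ (p.1 - p.2)) ^ 2 / p.2 ^ 2) := lintegral_iUnion_le _ _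
    _ ≤ ∑' m : ℕ, ∑' ℓ : ℤ, if r ≤ R * |(ℓ : ℝ)| / 2 ^ m ∧ R * |(ℓ : ℝ)| / 2 ^ m ≤ R then
            2 * ENNReal.ofReal ((ψ (((ℓ : ℝ) + 2) * R / 2 ^ m) - ψ (((ℓ : ℝ) - 2) * R / 2 ^ m)) ^ 2)
          else 0 := ENNReal.tsum_le_tsum hstrip
    _ = 2 * ∑' m : ℕ, ∑' ℓ : ℤ, if r ≤ R * |(ℓ : ℝ)| / 2 ^ m ∧ R * |(ℓ : ℝ)| / 2 ^ m ≤ R then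
            ENNReal.ofReal ((ψ (((ℓ : ℝ) + 2) * R / 2 ^ m) - ψ (((ℓ : ℝ) - 2) * R / 2 ^ m)) ^ 2)
          else 0 := by
        rw [← ENNReal.tsum_mul_left]
        apply tsum_congr; intro m
        rw [← ENNReal.tsum_mul_left]
        apply tsum_congr; intro ℓ
        split <;> simp

lemma region_neg (ψ : ℝ → ℝ) (hmono : Monotone ψ) (r R : ℝ)
    (h1 : 0 < r) (h2 : r < R) :
    ∫⁻ p in Set.Ico (-R) (-r) ×ˢ Set.Ioc 0 R,
        ENNReal.ofReal ((ψ (p.1 + p.2) - ψ (p.1 - p.2)) ^ 2 / p.2 ^ 2) ≤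
      2 * ∑' m : ℕ, ∑' ℓ : ℤ,
          if r ≤ R * |(ℓ : ℝ)| / 2 ^ m ∧ R * |(ℓ : ℝ)| / 2 ^ m ≤ R then
            ENNReal.ofReal ((ψ (((ℓ : ℝ) + 2) * R / 2 ^ m) - ψ (((ℓ : ℝ) - 2) * R / 2 ^ m)) ^ 2)
          else 0 := by
  have hR : 0 < R := h1.trans h2
  have hstrip : ∀ m : ℕ,
      ∫⁻ p in Set.Ico (-R) (-r) ×ˢ Set.Ioc (R / 2 ^ (m + 1)) (R / 2 ^ m),
        ENNReal.ofReal ((ψ (p.1 + p.2) - ψ (p.1 - p.2)) ^ 2 / p.2 ^ 2) ≤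
      ∑' ℓ : ℤ, if r ≤ R * |(ℓ : ℝ)| / 2 ^ m ∧ R * |(ℓ : ℝ)| / 2 ^ m ≤ R then
            2 * ENNReal.ofReal ((ψ (((ℓ : ℝ) + 2) * R / 2 ^ m) - ψ (((ℓ : ℝ) - 2) * R / 2 ^ m)) ^ 2)
          else 0 := by
    intro m
    have hapos : (0:ℝ) < R / 2 ^ m := by positivity
    calc ∫⁻ p in Set.Ico (-R) (-r) ×ˢ Set.Ioc (R / 2 ^ (m + 1)) (R / 2 ^ m),
          ENNReal.ofReal ((ψ (p.1 + p.2) - ψ (p.1 - p.2)) ^ 2 / p.2 ^ 2)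
        ≤ ∫⁻ p in (⋃ ℓ : ℤ, (Set.Ico ((ℓ:ℝ) * (R / 2 ^ m)) (((ℓ:ℝ) + 1) * (R / 2 ^ m)) ∩ Set.Ico (-R) (-r))
            ×ˢ Set.Ioc (R / 2 ^ (m + 1)) (R / 2 ^ m)),
          ENNReal.ofReal ((ψ (p.1 + p.2) - ψ (p.1 - p.2)) ^ 2 / p.2 ^ 2) := by
          apply lintegral_mono_set
          rw [← Set.iUnion_prod_const]
          apply Set.prod_mono ?_ subset_rfl
          intro x hx
          obtain ⟨ℓ, hℓ⟩ := floor_cover x hapos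
          exact Set.mem_iUnion.mpr ⟨ℓ, hℓ, hx⟩
      _ ≤ ∑' ℓ : ℤ, ∫⁻ p in (Set.Ico ((ℓ:ℝ) * (R / 2 ^ m)) (((ℓ:ℝ) + 1) * (R / 2 ^ m)) ∩ Set.Ico (-R) (-r))
            ×ˢ Set.Ioc (R / 2 ^ (m + 1)) (R / 2 ^ m),
          ENNReal.ofReal ((ψ (p.1 + p.2) - ψ (p.1 - p.2)) ^ 2 / p.2 ^ 2) :=
          lintegral_iUnion_le _ _
      _ ≤ _ := ENNReal.tsum_le_tsum (fun ℓ => piece_neg ψ hmono r R h1 h2 m ℓ)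
  calc ∫⁻ p in Set.Ico (-R) (-r) ×ˢ Set.Ioc 0 R,
        ENNReal.ofReal ((ψ (p.1 + p.2) - ψ (p.1 - p.2)) ^ 2 / p.2 ^ 2)
      ≤ ∫⁻ p in (⋃ m : ℕ, Set.Ico (-R) (-r) ×ˢ Set.Ioc (R / 2 ^ (m + 1)) (R / 2 ^ m)),
        ENNReal.ofReal ((ψ (p.1 + p.2) - ψ (p.1 - p.2)) ^ 2 / p.2 ^ 2) := by
        apply lintegral_mono_set
        rw [← Set.prod_iUnion]
        apply Set.prod_mono subset_rfl
        intro y hy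
        obtain ⟨m, hm⟩ := dyadic_mem hR hy
        exact Set.mem_iUnion.mpr ⟨m, hm⟩
    _ ≤ ∑' m : ℕ, ∫⁻ p in Set.Ico (-R) (-r) ×ˢ Set.Ioc (R / 2 ^ (m + 1)) (R / 2 ^ m),
        ENNReal.ofReal ((ψ (p.1 + p.2) - ψ (p.1 - p.2)) ^ 2 / p.2 ^ 2) := lintegral_iUnion_le _ _
    _ ≤ ∑' m : ℕ, ∑' ℓ : ℤ, if r ≤ R * |(ℓ : ℝ)| / 2 ^ m ∧ R * |(ℓ : ℝ)| / 2 ^ m ≤ R then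
            2 * ENNReal.ofReal ((ψ (((ℓ : ℝ) + 2) * R / 2 ^ m) - ψ (((ℓ : ℝ) - 2) * R / 2 ^ m)) ^ 2)
          else 0 := ENNReal.tsum_le_tsum hstrip
    _ = 2 * ∑' m : ℕ, ∑' ℓ : ℤ, if r ≤ R * |(ℓ : ℝ)| / 2 ^ m ∧ R * |(ℓ : ℝ)| / 2 ^ m ≤ R then
            ENNReal.ofReal ((ψ (((ℓ : ℝ) + 2) * R / 2 ^ m) - ψ (((ℓ : ℝ) - 2) * R / 2 ^ m)) ^ 2)
          else 0 := by
        rw [← ENNReal.tsum_mul_left]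
        apply tsum_congr; intro m
        rw [← ENNReal.tsum_mul_left]
        apply tsum_congr; intro ℓ
        split <;> simp

lemma region_mid (ψ : ℝ → ℝ) (hmono : Monotone ψ) (r R : ℝ)
    (h1 : 0 < r) (h2 : r < R) :
    ∫⁻ p in Set.Icc (-r) r ×ˢ Set.Icc r R,
        ENNReal.ofReal ((ψ (p.1 + p.2) - ψ (p.1 - p.2)) ^ 2 / p.2 ^ 2) ≤
      ENNReal.ofReal (2 * (ψ (2 * R) - ψ (-(2 * R))) ^ 2) := by
  have hR : 0 < R := h1.trans h2
  set M : ℝ := ψ (2 * R) - ψ (-(2 * R)) with hM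
  have hM0 : 0 ≤ M := by
    have := hmono (by linarith : -(2*R) ≤ 2*R); rw [hM]; linarith
  -- pointwise bound
  have key : ∀ p : ℝ × ℝ, p ∈ Set.Icc (-r) r ×ˢ Set.Icc r R →
      ENNReal.ofReal ((ψ (p.1 + p.2) - ψ (p.1 - p.2)) ^ 2 / p.2 ^ 2) ≤
      ENNReal.ofReal (M ^ 2) * ENNReal.ofReal (1 / p.2 ^ 2) := by
    rintro ⟨x, y⟩ ⟨⟨hxa, hxb⟩, hya, hyb⟩
    simp only
    rw [← ENNReal.ofReal_mul (by positivity)]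
    apply ENNReal.ofReal_le_ofReal
    have hy0 : 0 < y := h1.trans_le hya
    have hd0 : 0 ≤ ψ (x + y) - ψ (x - y) := by
      have := hmono (by linarith : x - y ≤ x + y); linarith
    have hdc : ψ (x + y) - ψ (x - y) ≤ M := by
      have := hmono (by linarith : x + y ≤ 2 * R)
      have := hmono (by linarith : -(2 * R) ≤ x - y)
      rw [hM]; linarith
    have hsq : (ψ (x + y) - ψ (x - y)) ^ 2 ≤ M ^ 2 := pow_le_pow_left₀ hd0 hdc 2
    calc (ψ (x + y) - ψ (x - y)) ^ 2 / y ^ 2 ≤ M ^ 2 / y ^ 2 := by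
          apply div_le_div_of_nonneg_right ?_ (by positivity)
          · exact hsq
      _ = M ^ 2 * (1 / y ^ 2) := by ring
  have hImeas : Measurable (fun p : ℝ × ℝ => ENNReal.ofReal (1 / p.2 ^ 2)) := by
    apply Measurable.ennreal_ofReal
    exact (measurable_const.div ((measurable_snd).pow_const 2))
  have hIy : ∫⁻ y in Set.Icc r R, ENNReal.ofReal (1 / y ^ 2) ≤ ENNReal.ofReal (1 / r) := by
    rw [setLIntegral_congr (Ioc_ae_eq_Icc (μ := volume) (a := r) (b := R)).symm]
    have hcont : ContinuousOn (fun y : ℝ => 1 / y ^ 2) (Set.Icc r R) := by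
      apply ContinuousOn.div continuousOn_const ((continuous_pow 2).continuousOn)
      intro x hx
      have : 0 < x := lt_of_lt_of_le h1 hx.1
      positivity
    have hint : IntegrableOn (fun y : ℝ => 1 / y ^ 2) (Set.Ioc r R) volume :=
      (hcont.integrableOn_Icc).mono_set Set.Ioc_subset_Icc_self
    rw [← ofReal_integral_eq_lintegral_ofReal hint
      (Filter.Eventually.of_forall (fun y => by positivity))]
    apply ENNReal.ofReal_le_ofReal
    have heq : ∫ y in Set.Ioc r R, 1 / y ^ 2 = 1 / r - 1 / R := by
      rw [← intervalIntegral.integral_of_le h2.le]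
      have hzp : ∀ x ∈ Set.uIcc r R, (1:ℝ) / x ^ 2 = x ^ (-2 : ℤ) := by
        intro x hx
        rw [zpow_neg, one_div]
        norm_cast
      rw [intervalIntegral.integral_congr hzp]
      rw [integral_zpow (Or.inr ⟨by norm_num, fun hmem => by
        rw [Set.uIcc_of_le h2.le] at hmem
        exact absurd hmem.1 (not_le.mpr h1)⟩)]
      have hrne : r ≠ 0 := h1.ne'
      have hRne : R ≠ 0 := hR.ne'
      norm_num
      ring
    rw [heq]
    have : 0 < 1 / R := by positivity
    linarith
  calc ∫⁻ p in Set.Icc (-r) r ×ˢ Set.Icc r R,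
        ENNReal.ofReal ((ψ (p.1 + p.2) - ψ (p.1 - p.2)) ^ 2 / p.2 ^ 2)
      ≤ ∫⁻ p in Set.Icc (-r) r ×ˢ Set.Icc r R,
        ENNReal.ofReal (M ^ 2) * ENNReal.ofReal (1 / p.2 ^ 2) := by
        apply setLIntegral_mono' (measurableSet_Icc.prod measurableSet_Icc) key
    _ = ENNReal.ofReal (M ^ 2) * ∫⁻ p in Set.Icc (-r) r ×ˢ Set.Icc r R,
        ENNReal.ofReal (1 / p.2 ^ 2) := lintegral_const_mul' _ _ ENNReal.ofReal_ne_top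
    _ ≤ ENNReal.ofReal (M ^ 2) * (ENNReal.ofReal (1 / r) * ENNReal.ofReal (2 * r)) := by
        refine mul_le_mul_right ?_ _
        have hrw : (volume : Measure (ℝ × ℝ)).restrict (Set.Icc (-r) r ×ˢ Set.Icc r R) =
            (volume.restrict (Set.Icc (-r) r)).prod (volume.restrict (Set.Icc r R)) := by
          rw [Measure.prod_restrict, ← Measure.volume_eq_prod]
        rw [hrw, lintegral_prod _ hImeas.aemeasurable]
        simp only
        rw [lintegral_const]
        calc (∫⁻ y in Set.Icc r R, ENNReal.ofReal (1 / y ^ 2)) *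
              (volume.restrict (Set.Icc (-r) r)) Set.univ
            = (∫⁻ y in Set.Icc r R, ENNReal.ofReal (1 / y ^ 2)) * ENNReal.ofReal (2 * r) := by
              rw [Measure.restrict_apply MeasurableSet.univ, Set.univ_inter, Real.volume_Icc]
              congr 1
              rw [show r - -r = 2 * r by ring]
          _ ≤ ENNReal.ofReal (1 / r) * ENNReal.ofReal (2 * r) := mul_le_mul_left hIy _
    _ = ENNReal.ofReal (2 * M ^ 2) := by
        rw [← ENNReal.ofReal_mul (by positivity), ← ENNReal.ofReal_mul (by positivity)]
        congr 1
        field_simp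

theorem stmt12 (ψ : ℝ → ℝ) (hmono : Monotone ψ) (r R : ℝ)
    (h1 : 0 < r) (h2 : r < R) (h3 : R < 1) :
    ∫⁻ p in (Set.Icc (-R) R ×ˢ Set.Ioc 0 R) \ (Set.Icc (-r) r ×ˢ Set.Ioo 0 r),
        ENNReal.ofReal ((ψ (p.1 + p.2) - ψ (p.1 - p.2)) ^ 2 / p.2 ^ 2) ≤
      ENNReal.ofReal (2 * (ψ (2 * R) - ψ (-(2 * R))) ^ 2) +
        8 * ∑' m : ℕ, ∑' ℓ : ℤ,
          if r ≤ R * |(ℓ : ℝ)| / 2 ^ m ∧ R * |(ℓ : ℝ)| / 2 ^ m ≤ R then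
            ENNReal.ofReal ((ψ (((ℓ : ℝ) + 2) * R / 2 ^ m) - ψ (((ℓ : ℝ) - 2) * R / 2 ^ m)) ^ 2)
          else 0 := by
  set T : ℝ≥0∞ := ∑' m : ℕ, ∑' ℓ : ℤ,
          if r ≤ R * |(ℓ : ℝ)| / 2 ^ m ∧ R * |(ℓ : ℝ)| / 2 ^ m ≤ R then
            ENNReal.ofReal ((ψ (((ℓ : ℝ) + 2) * R / 2 ^ m) - ψ (((ℓ : ℝ) - 2) * R / 2 ^ m)) ^ 2)
          else 0 with hT
  have hsub : (Set.Icc (-R) R ×ˢ Set.Ioc 0 R) \ (Set.Icc (-r) r ×ˢ Set.Ioo 0 r) ⊆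
      (Set.Icc (-r) r ×ˢ Set.Icc r R) ∪
      (Set.Ico (-R) (-r) ×ˢ Set.Ioc 0 R ∪ Set.Ioc r R ×ˢ Set.Ioc 0 R) := by
    rintro p ⟨⟨⟨hx1, hx2⟩, hy1, hy2⟩, hnot⟩
    by_cases hc : -r ≤ p.1 ∧ p.1 ≤ r
    · left
      refine ⟨⟨hc.1, hc.2⟩, ?_, hy2⟩
      by_contra hlt
      push_neg at hlt
      exact hnot ⟨⟨hc.1, hc.2⟩, hy1, hlt⟩
    · right
      rcases not_and_or.mp hc with h | h
      · exact Or.inl ⟨⟨hx1, not_le.mp h⟩, hy1, hy2⟩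
      · exact Or.inr ⟨⟨not_le.mp h, hx2⟩, hy1, hy2⟩
  calc ∫⁻ p in (Set.Icc (-R) R ×ˢ Set.Ioc 0 R) \ (Set.Icc (-r) r ×ˢ Set.Ioo 0 r),
        ENNReal.ofReal ((ψ (p.1 + p.2) - ψ (p.1 - p.2)) ^ 2 / p.2 ^ 2)
      ≤ ∫⁻ p in (Set.Icc (-r) r ×ˢ Set.Icc r R) ∪
          (Set.Ico (-R) (-r) ×ˢ Set.Ioc 0 R ∪ Set.Ioc r R ×ˢ Set.Ioc 0 R),
        ENNReal.ofReal ((ψ (p.1 + p.2) - ψ (p.1 - p.2)) ^ 2 / p.2 ^ 2) :=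
        lintegral_mono_set hsub
    _ ≤ (∫⁻ p in Set.Icc (-r) r ×ˢ Set.Icc r R,
          ENNReal.ofReal ((ψ (p.1 + p.2) - ψ (p.1 - p.2)) ^ 2 / p.2 ^ 2)) +
        (∫⁻ p in Set.Ico (-R) (-r) ×ˢ Set.Ioc 0 R ∪ Set.Ioc r R ×ˢ Set.Ioc 0 R,
          ENNReal.ofReal ((ψ (p.1 + p.2) - ψ (p.1 - p.2)) ^ 2 / p.2 ^ 2)) :=
        lintegral_union_le _ _ _
    _ ≤ (∫⁻ p in Set.Icc (-r) r ×ˢ Set.Icc r R,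
          ENNReal.ofReal ((ψ (p.1 + p.2) - ψ (p.1 - p.2)) ^ 2 / p.2 ^ 2)) +
        ((∫⁻ p in Set.Ico (-R) (-r) ×ˢ Set.Ioc 0 R,
          ENNReal.ofReal ((ψ (p.1 + p.2) - ψ (p.1 - p.2)) ^ 2 / p.2 ^ 2)) +
         (∫⁻ p in Set.Ioc r R ×ˢ Set.Ioc 0 R,
          ENNReal.ofReal ((ψ (p.1 + p.2) - ψ (p.1 - p.2)) ^ 2 / p.2 ^ 2))) :=
        add_le_add le_rfl (lintegral_union_le _ _ _)
    _ ≤ ENNReal.ofReal (2 * (ψ (2 * R) - ψ (-(2 * R))) ^ 2) + (2 * T + 2 * T) :=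
        add_le_add (region_mid ψ hmono r R h1 h2)
          (add_le_add (region_neg ψ hmono r R h1 h2) (region_pos ψ hmono r R h1 h2))
    _ ≤ ENNReal.ofReal (2 * (ψ (2 * R) - ψ (-(2 * R))) ^ 2) + 8 * T := by
        apply add_le_add le_rfl
        calc 2 * T + 2 * T = 4 * T := by ring
          _ ≤ 8 * T := mul_le_mul_left (by norm_num) T
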